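/- Let Ω ⊂ ℝᵈ be bounded open, and let a^{ij}, b^i, c¹ ∈ L^∞(Ω) with ‖a^{ij}‖_∞, ‖b^i‖_∞, ‖c¹‖_∞ ≤ Λ₁. Assume the symmetric a^{ij} satisfy ellipticity and the Cordès condition with parameter ε ∈ (0,1], let θ = (Σᵢa^{ii})/(Σ_{i,j}(a^{ij})²), let A > 0 satisfy ‖w‖_{H²} ≤ (1/A)‖Δw‖_{L²} for all w ∈ H²(Ω)∩H₀¹(Ω), and set C_m = max{‖θ‖_∞ maxᵢ‖bⁱ‖_∞ √d, ‖θ‖_∞‖c¹‖_∞}. If 1 − √(1−ε)/A − C_m/A > 0, then any u ∈ H²(Ω) ∩ H₀¹(Ω) with L₁u := Σ_{i,j}a^{ij}∂ᵢ∂ⱼu + Σᵢ bⁱ∂ᵢu + c¹u = 0 a.e. satisfies u = 0. -/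

import Mathlib

open MeasureTheory

/-- First-order partial derivative `∂u/∂xᵢ`. -/
noncomputable def pderiv1 {d : ℕ} (u : EuclideanSpace ℝ (Fin d) → ℝ) (i : Fin d)
    (x : EuclideanSpace ℝ (Fin d)) : ℝ :=
  fderiv ℝ u x (EuclideanSpace.single i 1)

/-- Second-order partial derivative `∂²u/∂xᵢ∂xⱼ`. -/
noncomputable def pderiv2 {d : ℕ} (u : EuclideanSpace ℝ (Fin d) → ℝ) (i j : Fin d)
    (x : EuclideanSpace ℝ (Fin d)) : ℝ :=
  pderiv1 (pderiv1 u j) i x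

/-- The Laplacian `Δu = Σᵢ ∂²u/∂xᵢ²`. -/
noncomputable def lap {d : ℕ} (u : EuclideanSpace ℝ (Fin d) → ℝ)
    (x : EuclideanSpace ℝ (Fin d)) : ℝ :=
  ∑ i, pderiv2 u i i x

/-- `L²(Ω)` norm. -/
noncomputable def L2norm {d : ℕ} (Ω : Set (EuclideanSpace ℝ (Fin d)))
    (f : EuclideanSpace ℝ (Fin d) → ℝ) : ℝ :=
  Real.sqrt (∫ x in Ω, (f x) ^ 2)

/-- `L²(Ω)` norm of the gradient. -/
noncomputable def gradL2norm {d : ℕ} (Ω : Set (EuclideanSpace ℝ (Fin d)))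
    (u : EuclideanSpace ℝ (Fin d) → ℝ) : ℝ :=
  Real.sqrt (∫ x in Ω, ∑ i, (pderiv1 u i x) ^ 2)

/-- The `H²(Ω)` norm. -/
noncomputable def H2norm {d : ℕ} (Ω : Set (EuclideanSpace ℝ (Fin d)))
    (u : EuclideanSpace ℝ (Fin d) → ℝ) : ℝ :=
  L2norm Ω u + gradL2norm Ω u + ∑ i, ∑ j, L2norm Ω (pderiv2 u i j)


open Bornology

section helpers
variable {α : Type*} [MeasurableSpace α] {μ : Measure α}

variable {α : Type*} [MeasurableSpace α] {μ : Measure α}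

lemma sqrt_sum_le {ι : Type*} (s : Finset ι) (f : ι → ℝ) (hf : ∀ i, 0 ≤ f i) :
    Real.sqrt (∑ i ∈ s, f i) ≤ ∑ i ∈ s, Real.sqrt (f i) := by
  classical
  induction s using Finset.cons_induction with
  | empty => simp
  | cons a s ha ih =>
    rw [Finset.sum_cons, Finset.sum_cons]
    have h1 : Real.sqrt (f a + ∑ i ∈ s, f i) ≤ Real.sqrt (f a) + Real.sqrt (∑ i ∈ s, f i) := by
      have hs : (0:ℝ) ≤ ∑ i ∈ s, f i := Finset.sum_nonneg fun i _ => hf i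
      have : f a + ∑ i ∈ s, f i ≤ (Real.sqrt (f a) + Real.sqrt (∑ i ∈ s, f i))^2 := by
        have e1 := Real.sq_sqrt (hf a)
        have e2 := Real.sq_sqrt hs
        nlinarith [Real.sqrt_nonneg (f a), Real.sqrt_nonneg (∑ i ∈ s, f i),
          mul_nonneg (Real.sqrt_nonneg (f a)) (Real.sqrt_nonneg (∑ i ∈ s, f i))]
      calc Real.sqrt (f a + ∑ i ∈ s, f i)
          ≤ Real.sqrt ((Real.sqrt (f a) + Real.sqrt (∑ i ∈ s, f i))^2) := Real.sqrt_le_sqrt this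
        _ = _ := Real.sqrt_sq (by positivity)
    exact h1.trans (by linarith [ih])

lemma l2_cs (f g : α → ℝ) (hf : MemLp f 2 μ) (hg : MemLp g 2 μ)
    (hf0 : ∀ x, 0 ≤ f x) (hg0 : ∀ x, 0 ≤ g x) :
    ∫ x, f x * g x ∂μ ≤ Real.sqrt (∫ x, f x ^ 2 ∂μ) * Real.sqrt (∫ x, g x ^ 2 ∂μ) := by
  have hpq : Real.HolderConjugate 2 2 := by constructor <;> norm_num
  have h2 : ENNReal.ofReal (2:ℝ) = 2 := by norm_num [ENNReal.ofReal_ofNat]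
  have := integral_mul_le_Lp_mul_Lq_of_nonneg (μ := μ) hpq
    (Filter.Eventually.of_forall hf0) (Filter.Eventually.of_forall hg0)
    (by rw [h2]; exact hf) (by rw [h2]; exact hg)
  calc ∫ x, f x * g x ∂μ ≤ (∫ a, f a ^ (2:ℝ) ∂μ) ^ (1/(2:ℝ)) * (∫ a, g a ^ (2:ℝ) ∂μ) ^ (1/(2:ℝ)) := this
    _ = Real.sqrt (∫ x, f x ^ 2 ∂μ) * Real.sqrt (∫ x, g x ^ 2 ∂μ) := by
        rw [Real.sqrt_eq_rpow, Real.sqrt_eq_rpow]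
        norm_num [Real.rpow_two]

lemma l2_mink (f g : α → ℝ) (hf : MemLp f 2 μ) (hg : MemLp g 2 μ)
    (hf0 : ∀ x, 0 ≤ f x) (hg0 : ∀ x, 0 ≤ g x) :
    Real.sqrt (∫ x, (f x + g x) ^ 2 ∂μ) ≤
      Real.sqrt (∫ x, f x ^ 2 ∂μ) + Real.sqrt (∫ x, g x ^ 2 ∂μ) := by
  have hif : Integrable (fun x => f x ^ 2) μ := hf.integrable_sq
  have hig : Integrable (fun x => g x ^ 2) μ := hg.integrable_sq
  have hifg : Integrable (fun x => f x * g x) μ := by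
    refine Integrable.mono' ((hif.add hig).div_const 2) (hf.1.mul hg.1) ?_
    refine Filter.Eventually.of_forall fun x => ?_
    rw [Real.norm_of_nonneg (mul_nonneg (hf0 x) (hg0 x))]
    simp only [Pi.add_apply, Pi.div_apply]
    nlinarith [sq_nonneg (f x - g x)]
  have hexp : ∫ x, (f x + g x) ^ 2 ∂μ
      = (∫ x, f x ^ 2 ∂μ) + 2 * (∫ x, f x * g x ∂μ) + ∫ x, g x ^ 2 ∂μ := by
    have : ∀ x, (f x + g x)^2 = f x ^2 + 2*(f x * g x) + g x ^2 := fun x => by ring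
    simp_rw [this]
    have hc : Integrable (fun x => 2 * (f x * g x)) μ := hifg.const_mul 2
    have hsum : Integrable (fun x => f x ^ 2 + 2 * (f x * g x)) μ := hif.add hc
    rw [integral_add hsum hig, integral_add hif hc, MeasureTheory.integral_const_mul]

  have hcs := l2_cs f g hf hg hf0 hg0
  have h1 : (0:ℝ) ≤ ∫ x, f x ^ 2 ∂μ := integral_nonneg fun x => sq_nonneg _
  have h2 : (0:ℝ) ≤ ∫ x, g x ^ 2 ∂μ := integral_nonneg fun x => sq_nonneg _
  have e1 := Real.sq_sqrt h1
  have e2 := Real.sq_sqrt h2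
  rw [hexp]
  have : (∫ x, f x ^ 2 ∂μ) + 2 * (∫ x, f x * g x ∂μ) + (∫ x, g x ^ 2 ∂μ)
      ≤ (Real.sqrt (∫ x, f x ^ 2 ∂μ) + Real.sqrt (∫ x, g x ^ 2 ∂μ))^2 := by
    nlinarith [Real.sqrt_nonneg (∫ x, f x ^ 2 ∂μ), Real.sqrt_nonneg (∫ x, g x ^ 2 ∂μ)]
  calc Real.sqrt _ ≤ Real.sqrt ((Real.sqrt (∫ x, f x ^ 2 ∂μ) + Real.sqrt (∫ x, g x ^ 2 ∂μ))^2) :=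
        Real.sqrt_le_sqrt this
    _ = _ := Real.sqrt_sq (by positivity)

end helpers

lemma contDiff_pderiv1 {d : ℕ} {u : EuclideanSpace ℝ (Fin d) → ℝ} (hu : ContDiff ℝ 2 u)
    (i : Fin d) : ContDiff ℝ 1 (pderiv1 u i) := by
  have h : ContDiff ℝ 1 (fderiv ℝ u) := hu.fderiv_right (by norm_num)
  exact h.clm_apply contDiff_const

lemma continuous_pderiv2 {d : ℕ} {u : EuclideanSpace ℝ (Fin d) → ℝ} (hu : ContDiff ℝ 2 u)
    (i j : Fin d) : Continuous (pderiv2 u i j) := by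
  have h : ContDiff ℝ 0 (fderiv ℝ (pderiv1 u j)) :=
    (contDiff_pderiv1 hu j).fderiv_right (by norm_num)
  exact (h.clm_apply contDiff_const).continuous

lemma continuous_lap {d : ℕ} {u : EuclideanSpace ℝ (Fin d) → ℝ} (hu : ContDiff ℝ 2 u) :
    Continuous (lap u) :=
  continuous_finset_sum _ fun i _ => continuous_pderiv2 hu i i

lemma mem2_of_cont {d : ℕ} {Ω : Set (EuclideanSpace ℝ (Fin d))}
    (hΩo : IsOpen Ω) (hΩb : IsBounded Ω) {f : EuclideanSpace ℝ (Fin d) → ℝ}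
    (hf : Continuous f) : MemLp f 2 (volume.restrict Ω) := by
  have : Fact (volume Ω < ⊤) := ⟨hΩb.measure_lt_top⟩
  have hfin : IsFiniteMeasure (volume.restrict Ω) :=
    ⟨by rw [Measure.restrict_apply_univ]; exact hΩb.measure_lt_top⟩
  obtain ⟨C, hC⟩ := hΩb.isCompact_closure.exists_bound_of_continuousOn hf.continuousOn
  exact MemLp.of_bound hf.aestronglyMeasurable C <| by
    filter_upwards [ae_restrict_mem hΩo.measurableSet] with x hx
    exact hC x (subset_closure hx)


lemma pointwise_core {d : ℕ} (hd : 0 < d) (A M : Fin d → Fin d → ℝ)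
    (g : Fin d → ℝ) (uv c : ℝ) (b : Fin d → ℝ)
    (lam ε Θ Mb Mc : ℝ) (hlam : 0 < lam) (hε : 0 < ε) (hε1 : ε ≤ 1)
    (hdiag : ∀ k, lam ≤ A k k)
    (hcordes : (∑ i, ∑ j, (A i j)^2) / (∑ i, A i i)^2 ≤ 1 / ((d:ℝ) - 1 + ε))
    (hΘ : |(∑ i, A i i) / (∑ i, ∑ j, (A i j)^2)| ≤ Θ)
    (hMb : ∀ i, |b i| ≤ Mb) (hMc : |c| ≤ Mc)
    (heq : (∑ i, ∑ j, A i j * M i j) + (∑ i, b i * g i) + c * uv = 0) :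
    |∑ i, M i i| ≤ Real.sqrt (1-ε) * Real.sqrt (∑ i, ∑ j, (M i j)^2)
      + (Θ * Mb * Real.sqrt d) * Real.sqrt (∑ i, (g i)^2) + (Θ * Mc) * |uv| := by
  classical
  set t : ℝ := ∑ i, A i i with ht_def
  set S : ℝ := ∑ i, ∑ j, (A i j)^2 with hS_def
  set θ : ℝ := t / S with hθ_def
  have k0 : Fin d := ⟨0, hd⟩
  have ht : (d:ℝ) * lam ≤ t := by
    calc (d:ℝ) * lam = ∑ _i : Fin d, lam := by simp [mul_comm]
      _ ≤ t := Finset.sum_le_sum fun i _ => hdiag i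
  have ht0 : 0 < t := lt_of_lt_of_le (by positivity) ht
  have hS : lam^2 ≤ S := by
    have h1 : (A k0 k0)^2 ≤ ∑ j, (A k0 j)^2 :=
      Finset.single_le_sum (f := fun j => (A k0 j)^2) (fun j _ => sq_nonneg _)
        (Finset.mem_univ k0)
    have h2 : (∑ j, (A k0 j)^2) ≤ S :=
      Finset.single_le_sum (f := fun i => ∑ j, (A i j)^2)
        (fun i _ => Finset.sum_nonneg fun j _ => sq_nonneg _) (Finset.mem_univ k0)
    have h3 : lam^2 ≤ (A k0 k0)^2 := pow_le_pow_left₀ hlam.le (hdiag k0) 2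
    linarith
  have hS0 : 0 < S := lt_of_lt_of_le (by positivity) hS
  have hd1 : (1:ℝ) ≤ d := by exact_mod_cast hd
  have hde : 0 < (d:ℝ) - 1 + ε := by linarith
  have hts : (d:ℝ) - 1 + ε ≤ t^2 / S := by
    rw [div_le_div_iff₀ (by positivity) hde] at hcordes
    rw [le_div_iff₀ hS0]
    nlinarith
  have hQ : (∑ i, ∑ j, (θ * A i j - if i = j then (1:ℝ) else 0)^2) = (d:ℝ) - t^2/S := by
    have e1 : ∀ i j : Fin d, (θ * A i j - if i = j then (1:ℝ) else 0)^2
        = θ^2 * (A i j)^2 - 2*θ*(if i = j then A i j else 0) + (if i = j then (1:ℝ) else 0) := by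
      intro i j; by_cases h : i = j <;> simp [h] <;> ring
    have A1 : (∑ x : Fin d, ∑ y : Fin d, θ^2 * (A x y)^2) = θ^2 * S := by
      rw [hS_def]; simp_rw [Finset.mul_sum]
    have A2 : (∑ x : Fin d, ∑ y : Fin d, 2*θ*(if x = y then A x y else 0)) = 2*θ*t := by
      rw [ht_def]
      simp_rw [Finset.mul_sum, mul_ite, mul_zero, Finset.sum_ite_eq, Finset.mem_univ, if_true]
    have A3 : (∑ x : Fin d, ∑ y : Fin d, if x = y then (1:ℝ) else 0) = (d:ℝ) := by
      simp_rw [Finset.sum_ite_eq, Finset.mem_univ, if_true]; simp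
    simp_rw [e1, Finset.sum_add_distrib, Finset.sum_sub_distrib]
    rw [A1, A2, A3, hθ_def]
    field_simp
    ring
  have hQle : (∑ i, ∑ j, (θ * A i j - if i = j then (1:ℝ) else 0)^2) ≤ 1 - ε := by
    rw [hQ]; linarith
  -- Cauchy-Schwarz for the matrix part
  set B : Fin d → Fin d → ℝ := fun i j => θ * A i j - if i = j then (1:ℝ) else 0 with hB_def
  have hcs1 : |∑ i, ∑ j, B i j * M i j|
      ≤ Real.sqrt (1-ε) * Real.sqrt (∑ i, ∑ j, (M i j)^2) := by
    have h2 : (∑ i, ∑ j, B i j * M i j)^2 ≤ (∑ i, ∑ j, (B i j)^2) * (∑ i, ∑ j, (M i j)^2) := by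
      have := Finset.sum_mul_sq_le_sq_mul_sq Finset.univ
        (fun p : Fin d × Fin d => B p.1 p.2) (fun p : Fin d × Fin d => M p.1 p.2)
      simpa [← Finset.univ_product_univ, Finset.sum_product] using this
    have hM0 : (0:ℝ) ≤ ∑ i, ∑ j, (M i j)^2 :=
      Finset.sum_nonneg fun i _ => Finset.sum_nonneg fun j _ => sq_nonneg _
    calc |∑ i, ∑ j, B i j * M i j| = Real.sqrt ((∑ i, ∑ j, B i j * M i j)^2) :=
          (Real.sqrt_sq_eq_abs _).symm
      _ ≤ Real.sqrt ((1-ε) * (∑ i, ∑ j, (M i j)^2)) := by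
          apply Real.sqrt_le_sqrt
          calc (∑ i, ∑ j, B i j * M i j)^2 ≤ (∑ i, ∑ j, (B i j)^2) * (∑ i, ∑ j, (M i j)^2) := h2
            _ ≤ (1-ε) * (∑ i, ∑ j, (M i j)^2) := by
                apply mul_le_mul_of_nonneg_right _ hM0
                exact hQle
      _ = Real.sqrt (1-ε) * Real.sqrt (∑ i, ∑ j, (M i j)^2) := Real.sqrt_mul (by linarith) _
  have hMb0 : 0 ≤ Mb := (abs_nonneg _).trans (hMb k0)
  have hMc0 : 0 ≤ Mc := (abs_nonneg _).trans hMc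
  have hΘ0 : 0 ≤ Θ := (abs_nonneg _).trans hΘ
  have hcs2 : |∑ i, b i * g i| ≤ Mb * (Real.sqrt d * Real.sqrt (∑ i, (g i)^2)) := by
    have h1 : |∑ i, b i * g i| ≤ ∑ i, |g i| * Mb := by
      calc |∑ i, b i * g i| ≤ ∑ i, |b i * g i| := Finset.abs_sum_le_sum_abs _ _
        _ ≤ ∑ i, |g i| * Mb := Finset.sum_le_sum fun i _ => by
            rw [abs_mul, mul_comm]
            exact mul_le_mul_of_nonneg_left (hMb i) (abs_nonneg _)
    have h2 : (∑ i, |g i|) ≤ Real.sqrt d * Real.sqrt (∑ i, (g i)^2) := by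
      have := Real.sum_mul_le_sqrt_mul_sqrt Finset.univ (fun _ : Fin d => (1:ℝ))
        (fun i => |g i|)
      simpa [sq_abs, Finset.card_univ, one_pow, Finset.sum_const, nsmul_eq_mul, mul_one,
        one_mul] using this
    calc |∑ i, b i * g i| ≤ ∑ i, |g i| * Mb := h1
      _ = (∑ i, |g i|) * Mb := by rw [Finset.sum_mul]
      _ ≤ (Real.sqrt d * Real.sqrt (∑ i, (g i)^2)) * Mb :=
          mul_le_mul_of_nonneg_right h2 hMb0
      _ = Mb * (Real.sqrt d * Real.sqrt (∑ i, (g i)^2)) := by ring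
  -- the main identity
  have hid : ∑ i, M i i = θ * (∑ i, ∑ j, A i j * M i j) - ∑ i, ∑ j, B i j * M i j := by
    simp_rw [hB_def, sub_mul, ite_mul, zero_mul, one_mul, Finset.sum_sub_distrib,
      Finset.sum_ite_eq, Finset.mem_univ, if_true, Finset.mul_sum, mul_assoc]
    ring
  have hAM : (∑ i, ∑ j, A i j * M i j) = -((∑ i, b i * g i) + c * uv) := by linarith
  have hθb : |θ| ≤ Θ := hΘ
  have hfin : |∑ i, M i i| ≤ |θ| * (|∑ i, b i * g i| + |c * uv|) + |∑ i, ∑ j, B i j * M i j| := by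
    rw [hid, hAM]
    calc |θ * -((∑ i, b i * g i) + c * uv) - ∑ i, ∑ j, B i j * M i j|
        ≤ |θ * -((∑ i, b i * g i) + c * uv)| + |∑ i, ∑ j, B i j * M i j| := abs_sub _ _
      _ ≤ |θ| * (|∑ i, b i * g i| + |c * uv|) + |∑ i, ∑ j, B i j * M i j| := by
          rw [abs_mul, abs_neg]
          exact add_le_add
            (mul_le_mul_of_nonneg_left (abs_add_le _ _) (abs_nonneg _)) le_rfl
  have hcu : |c * uv| ≤ Mc * |uv| := by
    rw [abs_mul]; exact mul_le_mul_of_nonneg_right hMc (abs_nonneg _)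
  have hg0 : 0 ≤ Real.sqrt (∑ i, (g i)^2) := Real.sqrt_nonneg _
  calc |∑ i, M i i| ≤ |θ| * (|∑ i, b i * g i| + |c * uv|) + |∑ i, ∑ j, B i j * M i j| := hfin
    _ ≤ Θ * (Mb * (Real.sqrt d * Real.sqrt (∑ i, (g i)^2)) + Mc * |uv|)
        + Real.sqrt (1-ε) * Real.sqrt (∑ i, ∑ j, (M i j)^2) := by
        have h1 : |∑ i, b i * g i| + |c * uv|
            ≤ Mb * (Real.sqrt d * Real.sqrt (∑ i, (g i)^2)) + Mc * |uv| := add_le_add hcs2 hcu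
        have h2 := mul_le_mul hθb h1 (by positivity) hΘ0
        exact add_le_add h2 hcs1
    _ = Real.sqrt (1-ε) * Real.sqrt (∑ i, ∑ j, (M i j)^2)
        + (Θ * Mb * Real.sqrt d) * Real.sqrt (∑ i, (g i)^2) + (Θ * Mc) * |uv| := by ring

set_option maxHeartbeats 1000000 in
/-- Definiteness of `u ↦ ‖L₁u‖_{L²(Ω)}` for the full second order operator
`L₁u = Σ a^{ij}∂ᵢ∂ⱼu + Σ bⁱ∂ᵢu + c¹u` with Cordès leading coefficients: if
`1 − √(1−ε)/A − C_m/A > 0` with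
`C_m = max{‖θ‖_∞ maxᵢ‖bⁱ‖_∞ √d, ‖θ‖_∞‖c¹‖_∞}`, then `L₁u = 0` in `Ω` and zero
boundary values force `u = 0`. -/
theorem stmt16 {d : ℕ} (Ω : Set (EuclideanSpace ℝ (Fin d)))
    (hΩo : IsOpen Ω) (hΩb : Bornology.IsBounded Ω)
    (a : Fin d → Fin d → EuclideanSpace ℝ (Fin d) → ℝ)
    (b : Fin d → EuclideanSpace ℝ (Fin d) → ℝ)
    (c1 : EuclideanSpace ℝ (Fin d) → ℝ)
    (Λ₁ : ℝ)
    (hΛa : ∀ i j, ∀ x ∈ Ω, |a i j x| ≤ Λ₁)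
    (hΛb : ∀ i, ∀ x ∈ Ω, |b i x| ≤ Λ₁)
    (hΛc : ∀ x ∈ Ω, |c1 x| ≤ Λ₁)
    (hsym : ∀ i j, ∀ x ∈ Ω, a i j x = a j i x)
    (ε : ℝ) (hε : ε ∈ Set.Ioc (0 : ℝ) 1)
    (lam Lam : ℝ) (hlam : 0 < lam)
    (hell : ∀ x ∈ Ω, ∀ η : Fin d → ℝ,
      lam * ∑ i, (η i) ^ 2 ≤ (∑ i, ∑ j, a i j x * η i * η j) ∧
      (∑ i, ∑ j, a i j x * η i * η j) ≤ Lam * ∑ i, (η i) ^ 2)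
    (hcordes : ∀ x ∈ Ω,
      (∑ i, ∑ j, (a i j x) ^ 2) / (∑ i, a i i x) ^ 2 ≤ 1 / ((d : ℝ) - 1 + ε))
    (A : ℝ) (hA : 0 < A)
    (hnorm : ∀ w : EuclideanSpace ℝ (Fin d) → ℝ, ContDiff ℝ 2 w →
      (∀ x ∈ frontier Ω, w x = 0) → H2norm Ω w ≤ (1 / A) * L2norm Ω (lap w))
    (Θ Mb Mc : ℝ)
    (hΘ : ∀ x ∈ Ω, |(∑ i, a i i x) / (∑ i, ∑ j, (a i j x) ^ 2)| ≤ Θ)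
    (hMb : ∀ i, ∀ x ∈ Ω, |b i x| ≤ Mb)
    (hMc : ∀ x ∈ Ω, |c1 x| ≤ Mc)
    (hpos : 1 - Real.sqrt (1 - ε) / A -
      max (Θ * Mb * Real.sqrt d) (Θ * Mc) / A > 0)
    (u : EuclideanSpace ℝ (Fin d) → ℝ) (hu : ContDiff ℝ 2 u)
    (hubd : ∀ x ∈ frontier Ω, u x = 0)
    (hL1u : ∀ x ∈ Ω,
      (∑ i, ∑ j, a i j x * pderiv2 u i j x) + (∑ i, b i x * pderiv1 u i x) +
        c1 x * u x = 0) :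
    ∀ x ∈ Ω, u x = 0 := by
  intro x₀ hx₀
  have hΩm : MeasurableSet Ω := hΩo.measurableSet
  have hμfin : IsFiniteMeasure (volume.restrict Ω) :=
    ⟨by rw [Measure.restrict_apply_univ]; exact hΩb.measure_lt_top⟩
  -- continuous building blocks
  have hcu : Continuous u := hu.continuous
  have hcg : ∀ i, Continuous (pderiv1 u i) := fun i => (contDiff_pderiv1 hu i).continuous
  have hcH2 : ∀ i j, Continuous (pderiv2 u i j) := continuous_pderiv2 hu
  have hclap : Continuous (lap u) := continuous_lap hu
  set Hf : EuclideanSpace ℝ (Fin d) → ℝ :=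
    fun x => Real.sqrt (∑ i, ∑ j, (pderiv2 u i j x)^2) with hHf_def
  set Gf : EuclideanSpace ℝ (Fin d) → ℝ :=
    fun x => Real.sqrt (∑ i, (pderiv1 u i x)^2) with hGf_def
  have hcHf : Continuous Hf :=
    (continuous_finset_sum _ fun i _ => continuous_finset_sum _ fun j _ =>
      (hcH2 i j).pow 2).sqrt
  have hcGf : Continuous Gf := (continuous_finset_sum _ fun i _ => (hcg i).pow 2).sqrt
  set Cb : ℝ := Θ * Mb * Real.sqrt d with hCb_def
  set Cc : ℝ := Θ * Mc with hCc_def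
  have hΘ0 : 0 ≤ Θ := (abs_nonneg _).trans (hΘ x₀ hx₀)
  have hMc0 : 0 ≤ Mc := (abs_nonneg _).trans (hMc x₀ hx₀)
  have hCc0 : 0 ≤ Cc := mul_nonneg hΘ0 hMc0
  have hCb0 : 0 ≤ Cb := by
    rcases Nat.eq_zero_or_pos d with hd0 | hd
    · subst hd0; simp [hCb_def]
    · have hMb0 : 0 ≤ Mb := (abs_nonneg _).trans (hMb ⟨0, hd⟩ x₀ hx₀)
      exact mul_nonneg (mul_nonneg hΘ0 hMb0) (Real.sqrt_nonneg _)
  -- pointwise estimate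
  have key : ∀ x ∈ Ω, |lap u x| ≤ Real.sqrt (1-ε) * Hf x + Cb * Gf x + Cc * |u x| := by
    intro x hx
    rcases Nat.eq_zero_or_pos d with hd0 | hd
    · subst hd0
      have hlap0 : lap u x = 0 := by simp [lap]
      rw [hlap0, abs_zero]
      have h1 : 0 ≤ Real.sqrt (1-ε) * Hf x :=
        mul_nonneg (Real.sqrt_nonneg _) (Real.sqrt_nonneg _)
      have h2 : Cb * Gf x = 0 := by simp [hCb_def]
      have h3 : 0 ≤ Cc * |u x| := mul_nonneg hCc0 (abs_nonneg _)
      linarith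
    · have hdiag : ∀ k, lam ≤ a k k x := by
        intro k
        have h := (hell x hx (Pi.single k (1:ℝ))).1
        simpa [Pi.single_apply, mul_ite, ite_mul, mul_zero, zero_mul, mul_one, one_mul,
          ite_pow, one_pow, Finset.sum_ite_eq, Finset.sum_ite_eq', Finset.mem_univ] using h
      have hcore := pointwise_core hd (fun i j => a i j x) (fun i j => pderiv2 u i j x)
        (fun i => pderiv1 u i x) (u x) (c1 x) (fun i => b i x) lam ε Θ Mb Mc hlam hε.1 hε.2
        hdiag (hcordes x hx) (hΘ x hx) (fun i => hMb i x hx) (hMc x hx) (hL1u x hx)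
      exact hcore
  -- Memℒp facts
  have hm_lap : MemLp (lap u) 2 (volume.restrict Ω) := mem2_of_cont hΩo hΩb hclap
  have hm_Hf : MemLp Hf 2 (volume.restrict Ω) := mem2_of_cont hΩo hΩb hcHf
  have hm_Gf : MemLp Gf 2 (volume.restrict Ω) := mem2_of_cont hΩo hΩb hcGf
  have hm_u : MemLp (fun x => |u x|) 2 (volume.restrict Ω) := mem2_of_cont hΩo hΩb hcu.abs
  have hm1 : MemLp (fun x => Real.sqrt (1-ε) * Hf x) 2 (volume.restrict Ω) :=
    hm_Hf.const_mul _
  have hm2 : MemLp (fun x => Cb * Gf x) 2 (volume.restrict Ω) := hm_Gf.const_mul _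
  have hm3 : MemLp (fun x => Cc * |u x|) 2 (volume.restrict Ω) := hm_u.const_mul _
  have hm23 : MemLp (fun x => Cb * Gf x + Cc * |u x|) 2 (volume.restrict Ω) := hm2.add hm3
  have hnn1 : ∀ x, 0 ≤ Real.sqrt (1-ε) * Hf x :=
    fun x => mul_nonneg (Real.sqrt_nonneg _) (Real.sqrt_nonneg _)
  have hnn2 : ∀ x, 0 ≤ Cb * Gf x := fun x => mul_nonneg hCb0 (Real.sqrt_nonneg _)
  have hnn3 : ∀ x, 0 ≤ Cc * |u x| := fun x => mul_nonneg hCc0 (abs_nonneg _)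
  have hnn23 : ∀ x, 0 ≤ Cb * Gf x + Cc * |u x| := fun x => add_nonneg (hnn2 x) (hnn3 x)
  -- step A : compare with the majorant
  have stepA : L2norm Ω (lap u) ≤ Real.sqrt
      (∫ x in Ω, (Real.sqrt (1-ε) * Hf x + (Cb * Gf x + Cc * |u x|))^2) := by
    rw [L2norm]
    apply Real.sqrt_le_sqrt
    apply setIntegral_mono_on hm_lap.integrable_sq
      (by exact (hm1.add hm23).integrable_sq) hΩm
    intro x hx
    have h1 := key x hx
    calc (lap u x)^2 = |lap u x|^2 := (sq_abs _).symm
      _ ≤ (Real.sqrt (1-ε) * Hf x + (Cb * Gf x + Cc * |u x|))^2 := by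
          apply pow_le_pow_left₀ (abs_nonneg _)
          linarith
  -- step B : Minkowski twice
  have stepB : Real.sqrt (∫ x in Ω, (Real.sqrt (1-ε) * Hf x + (Cb * Gf x + Cc * |u x|))^2)
      ≤ Real.sqrt (∫ x in Ω, (Real.sqrt (1-ε) * Hf x)^2)
        + (Real.sqrt (∫ x in Ω, (Cb * Gf x)^2) + Real.sqrt (∫ x in Ω, (Cc * |u x|)^2)) := by
    calc Real.sqrt (∫ x in Ω, (Real.sqrt (1-ε) * Hf x + (Cb * Gf x + Cc * |u x|))^2)
        ≤ Real.sqrt (∫ x in Ω, (Real.sqrt (1-ε) * Hf x)^2)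
          + Real.sqrt (∫ x in Ω, (Cb * Gf x + Cc * |u x|)^2) :=
          l2_mink _ _ hm1 hm23 hnn1 hnn23
      _ ≤ _ := by
          have := l2_mink _ _ hm2 hm3 hnn2 hnn3
          linarith
  -- step C : pull out constants
  have hCout : ∀ (cst : ℝ), 0 ≤ cst → ∀ h : EuclideanSpace ℝ (Fin d) → ℝ,
      Real.sqrt (∫ x in Ω, (cst * h x)^2) = cst * Real.sqrt (∫ x in Ω, (h x)^2) := by
    intro cst hcst h
    simp_rw [mul_pow]
    rw [MeasureTheory.integral_const_mul, Real.sqrt_mul (sq_nonneg cst), Real.sqrt_sq hcst]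
  -- step D : the Hessian term
  have stepD : Real.sqrt (∫ x in Ω, (Hf x)^2) ≤ ∑ i, ∑ j, L2norm Ω (pderiv2 u i j) := by
    have hint : ∀ i j : Fin d, Integrable (fun x => (pderiv2 u i j x)^2) (volume.restrict Ω) :=
      fun i j => (mem2_of_cont hΩo hΩb (hcH2 i j)).integrable_sq
    have e1 : (∫ x in Ω, (Hf x)^2) = ∑ i, ∑ j, ∫ x in Ω, (pderiv2 u i j x)^2 := by
      have e0 : ∀ x, (Hf x)^2 = ∑ i, ∑ j, (pderiv2 u i j x)^2 := fun x =>
        Real.sq_sqrt (Finset.sum_nonneg fun i _ => Finset.sum_nonneg fun j _ => sq_nonneg _)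
      simp_rw [e0]
      rw [integral_finset_sum _ fun i _ => integrable_finset_sum _ fun j _ => hint i j]
      exact Finset.sum_congr rfl fun i _ => integral_finset_sum _ fun j _ => hint i j
    rw [e1]
    calc Real.sqrt (∑ i, ∑ j, ∫ x in Ω, (pderiv2 u i j x)^2)
        ≤ ∑ i, Real.sqrt (∑ j, ∫ x in Ω, (pderiv2 u i j x)^2) :=
          sqrt_sum_le _ _ fun i => Finset.sum_nonneg fun j _ =>
            setIntegral_nonneg hΩm fun x _ => sq_nonneg _
      _ ≤ ∑ i, ∑ j, L2norm Ω (pderiv2 u i j) := Finset.sum_le_sum fun i _ =>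
          sqrt_sum_le _ _ fun j => setIntegral_nonneg hΩm fun x _ => sq_nonneg _
  -- identifications
  have idG : Real.sqrt (∫ x in Ω, (Gf x)^2) = gradL2norm Ω u := by
    rw [gradL2norm]
    congr 1
    refine setIntegral_congr_fun hΩm fun x _ => ?_
    exact Real.sq_sqrt (Finset.sum_nonneg fun i _ => sq_nonneg _)
  have idU : Real.sqrt (∫ x in Ω, |u x|^2) = L2norm Ω u := by
    rw [L2norm]
    congr 1
    refine setIntegral_congr_fun hΩm fun x _ => ?_
    exact sq_abs _
  -- assemble
  set L : ℝ := L2norm Ω (lap u) with hL_def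
  set U : ℝ := L2norm Ω u with hU_def
  set G : ℝ := gradL2norm Ω u with hG_def
  set K : ℝ := ∑ i, ∑ j, L2norm Ω (pderiv2 u i j) with hK_def
  have hU0 : 0 ≤ U := Real.sqrt_nonneg _
  have hG0 : 0 ≤ G := Real.sqrt_nonneg _
  have hK0 : 0 ≤ K := Finset.sum_nonneg fun i _ => Finset.sum_nonneg fun j _ =>
    Real.sqrt_nonneg _
  have hL0 : 0 ≤ L := Real.sqrt_nonneg _
  have hsqε : 0 ≤ Real.sqrt (1-ε) := Real.sqrt_nonneg _
  have hH2 : U + G + K ≤ (1/A) * L := by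
    have := hnorm u hu hubd
    rwa [H2norm] at this
  have hmain : L ≤ Real.sqrt (1-ε) * K + Cb * G + Cc * U := by
    have c1' := hCout (Real.sqrt (1-ε)) hsqε Hf
    have c2' := hCout Cb hCb0 Gf
    have c3' : Real.sqrt (∫ x in Ω, (Cc * |u x|)^2) = Cc * Real.sqrt (∫ x in Ω, |u x|^2) := by
      simp_rw [mul_pow]
      rw [MeasureTheory.integral_const_mul, Real.sqrt_mul (sq_nonneg Cc), Real.sqrt_sq hCc0]
    have hD' : Real.sqrt (1-ε) * Real.sqrt (∫ x in Ω, (Hf x)^2) ≤ Real.sqrt (1-ε) * K :=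
      mul_le_mul_of_nonneg_left stepD hsqε
    have := stepA.trans stepB
    rw [c1', c2', c3', idG, idU] at this
    linarith
  set Cm : ℝ := max Cb Cc with hCm_def
  have hCm0 : 0 ≤ Cm := le_trans hCb0 (le_max_left _ _)
  have hfinal : L = 0 := by
    have h1 : Cb * G ≤ Cm * G := mul_le_mul_of_nonneg_right (le_max_left _ _) hG0
    have h2 : Cc * U ≤ Cm * U := mul_le_mul_of_nonneg_right (le_max_right _ _) hU0
    have h3 : K ≤ (1/A) * L := by linarith
    have h4 : G + U ≤ (1/A) * L := by linarith
    have h5 : Real.sqrt (1-ε) * K ≤ Real.sqrt (1-ε) * ((1/A) * L) :=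
      mul_le_mul_of_nonneg_left h3 hsqε
    have h6 : Cm * (G + U) ≤ Cm * ((1/A) * L) := mul_le_mul_of_nonneg_left h4 hCm0
    have e5 : Real.sqrt (1-ε) * ((1/A) * L) = (Real.sqrt (1-ε)/A) * L := by ring
    have e6 : Cm * ((1/A) * L) = (Cm/A) * L := by ring
    have e7 : Cm * (G + U) = Cm * G + Cm * U := by ring
    have hL' : L ≤ (Real.sqrt (1-ε)/A + Cm/A) * L := by
      have : (Real.sqrt (1-ε)/A + Cm/A) * L
          = (Real.sqrt (1-ε)/A) * L + (Cm/A) * L := by ring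
      linarith
    have hc : Real.sqrt (1-ε)/A + Cm/A < 1 := by linarith [hpos]
    refine le_antisymm ?_ hL0
    by_contra hne
    push_neg at hne
    have : (Real.sqrt (1-ε)/A + Cm/A) * L < 1 * L := mul_lt_mul_of_pos_right hc hne
    linarith
  have hU_eq : U = 0 := by
    have : U ≤ (1/A) * L := by linarith
    rw [hfinal] at this
    have : U ≤ 0 := by linarith
    linarith
  -- from vanishing L² norm to pointwise vanishing
  have hint_u : (∫ x in Ω, (u x)^2) = 0 := by
    have h1 : 0 ≤ ∫ x in Ω, (u x)^2 := setIntegral_nonneg hΩm fun x _ => sq_nonneg _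
    have h2 : Real.sqrt (∫ x in Ω, (u x)^2) = 0 := hU_eq
    have := Real.sqrt_eq_zero'.mp h2
    linarith
  have hae : u =ᵐ[volume.restrict Ω] 0 := by
    have hi : Integrable (fun x => (u x)^2) (volume.restrict Ω) :=
      (mem2_of_cont hΩo hΩb hcu).integrable_sq
    have h0 : (fun x => (u x)^2) =ᵐ[volume.restrict Ω] 0 :=
      (integral_eq_zero_iff_of_nonneg_ae (Filter.Eventually.of_forall fun x => sq_nonneg _)
        hi).mp hint_u
    filter_upwards [h0] with x hx
    have : (u x)^2 = 0 := hx
    simpa using pow_eq_zero_iff (n := 2) (by norm_num) |>.mp this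
  have heq : Set.EqOn u 0 Ω := by
    apply Measure.eqOn_of_ae_eq hae hcu.continuousOn continuousOn_const
    rw [hΩo.interior_eq]
    exact subset_closure
  exact heq hx₀
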